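/- Let m ≥ 3 be odd and let A ⊆ {0,1,...,m−1} be neither empty nor all of {0,...,m−1}. Define MOD_m^A : {0,1}^n → {-1,1} by MOD_m^A(x) = −1 if Σx_i mod m ∈ A and 1 otherwise. Then for every nonempty S ⊆ [n], |MOD_m^A-hat(S)| ≤ 2m·(cos(π/(2m)))^n, and |MOD_m^A-hat(∅)| ≤ 1 − 2/m + 2m·(cos(π/(2m)))^n. -/

import Mathlib

open scoped BigOperators

noncomputable section

/-- sign value of a bit: `true` ↦ -1, `false` ↦ 1. -/
def sgnv (b : Bool) : ℝ := if b then -1 else 1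

/-- the Fourier character χ_S on `{0,1}^n`. -/
def chi {ι : Type*} (S : Finset ι) (x : ι → Bool) : ℝ := ∏ i ∈ S, sgnv (x i)

/-- the Fourier coefficient `f̂(S) = 2^{-n} Σ_x f(x) χ_S(x)`. -/
def fhat {ι : Type*} [Fintype ι] [DecidableEq ι] (f : (ι → Bool) → ℝ) (S : Finset ι) : ℝ :=
  (∑ x : ι → Bool, f x * chi S x) / 2 ^ (Fintype.card ι)

/-- the Hamming weight of `x ∈ {0,1}^n`. -/
def cnt {n : ℕ} (x : Fin n → Bool) : ℕ := (Finset.univ.filter fun i => x i = true).card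

/-- the function `MOD_m^A : {0,1}^n → {-1,1}`: value `-1` iff `Σ x_i mod m ∈ A`. -/
def MOD (n m : ℕ) (A : Finset ℕ) : (Fin n → Bool) → ℝ :=
  fun x => if cnt x % m ∈ A then -1 else 1

section AuxMODFourier
open Finset Complex
variable {m : ℕ}

lemma sum_pi_bool {ι : Type*} [Fintype ι] [DecidableEq ι] (f : ι → Bool → ℂ) :
    ∑ x : ι → Bool, ∏ i, f i (x i) = ∏ i, (f i false + f i true) := by
  rw [← Fintype.piFinset_univ, ← Finset.prod_univ_sum]
  simp [add_comm]

lemma T_eq {n : ℕ} (S : Finset (Fin n)) (z : ℂ) :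
    ∑ x : Fin n → Bool, (chi S x : ℂ) * z ^ cnt x
      = (1 - z) ^ S.card * (1 + z) ^ (n - S.card) := by
  have h1 : ∀ x : Fin n → Bool, (chi S x : ℂ) * z ^ cnt x
      = ∏ i : Fin n, (fun (i : Fin n) (b : Bool) =>
          (if i ∈ S then (sgnv b : ℂ) else 1) * z ^ (if b then 1 else 0)) i (x i) := by
    intro x
    simp only []
    rw [Finset.prod_mul_distrib]
    congr 1
    · rw [Finset.prod_ite_mem, Finset.univ_inter]
      push_cast [chi]
      rfl
    · rw [Finset.prod_pow_eq_pow_sum, cnt, Finset.card_filter]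
  simp only [h1]
  rw [sum_pi_bool (fun (i : Fin n) (b : Bool) =>
          (if i ∈ S then (sgnv b : ℂ) else 1) * z ^ (if b then 1 else 0))]
  trans (∏ i : Fin n, if i ∈ S then 1 - z else 1 + z)
  · exact Finset.prod_congr rfl (fun i _ => by by_cases h : i ∈ S <;> simp [h, sgnv] <;> ring)
  rw [Finset.prod_ite, Finset.prod_const, Finset.prod_const]
  congr 1
  · congr 1; simp
  · congr 1
    have : (filter (fun x => x ∉ S) univ) = Sᶜ := by ext i; simp
    rw [this, Finset.card_compl, Fintype.card_fin]



variable {m : ℕ}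

lemma roots_filter (hm0 : m ≠ 0) (k : ℕ) :
    ∑ a ∈ Finset.range m, (Complex.exp (2 * Real.pi * Complex.I / m)) ^ (a * k)
      = if m ∣ k then (m : ℂ) else 0 := by
  set ζ := Complex.exp (2 * Real.pi * Complex.I / m) with hζdef
  have hζ : IsPrimitiveRoot ζ m := Complex.isPrimitiveRoot_exp m hm0
  have hp : ∀ a : ℕ, ζ ^ (a * k) = (ζ ^ k) ^ a := by
    intro a; rw [← pow_mul, mul_comm]
  simp only [hp]
  by_cases hdvd : m ∣ k
  · rw [if_pos hdvd]
    have : ζ ^ k = 1 := (hζ.pow_eq_one_iff_dvd k).2 hdvd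
    simp [this]
  · rw [if_neg hdvd]
    have hne : ζ ^ k ≠ 1 := fun h => hdvd ((hζ.pow_eq_one_iff_dvd k).1 h)
    rw [geom_sum_eq hne]
    have : (ζ ^ k) ^ m = 1 := by
      rw [← pow_mul, mul_comm, pow_mul, hζ.pow_eq_one, one_pow]
    rw [this]
    simp

lemma dvd_iff_mod {k j : ℕ} (hj : j < m) : m ∣ k + (m - j) ↔ k % m = j := by
  have h1 : k + (m - j) = k + m - j := by omega
  rw [h1, ← Nat.modEq_iff_dvd' (by omega : j ≤ k + m)]
  unfold Nat.ModEq
  rw [Nat.mod_eq_of_lt hj, Nat.add_mod_right]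
  exact eq_comm

lemma key_identity (hm0 : m ≠ 0) (A : Finset ℕ) (hA : A ⊆ Finset.range m) (k : ℕ) :
    ((if k % m ∈ A then (-1 : ℝ) else 1) : ℂ)
      = 1 - (2 / m) * ∑ j ∈ A, ∑ a ∈ Finset.range m,
          ((Complex.exp (2 * Real.pi * Complex.I / m)) ^ a) ^ k
            * (Complex.exp (2 * Real.pi * Complex.I / m)) ^ (a * (m - j)) := by
  set ζ := Complex.exp (2 * Real.pi * Complex.I / m) with hζdef
  have hstep : ∀ j ∈ A, ∑ a ∈ Finset.range m, (ζ ^ a) ^ k * ζ ^ (a * (m - j))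
      = if k % m = j then (m : ℂ) else 0 := by
    intro j hjA
    have hj : j < m := Finset.mem_range.1 (hA hjA)
    have : ∀ a : ℕ, (ζ ^ a) ^ k * ζ ^ (a * (m - j)) = ζ ^ (a * (k + (m - j))) := by
      intro a; rw [mul_add, pow_add, ← pow_mul, mul_comm a k, mul_comm k a]
    simp only [this]
    rw [roots_filter hm0]; simp only [dvd_iff_mod hj]
  rw [Finset.sum_congr rfl hstep]
  rw [Finset.sum_ite_eq A (k % m) (fun _ => (m : ℂ))]
  have hmne : (m : ℂ) ≠ 0 := Nat.cast_ne_zero.2 hm0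
  by_cases h : k % m ∈ A <;> simp [h]
  rw [div_mul_cancel₀ _ hmne]; norm_num

lemma norm_one_sub_exp (θ : ℝ) :
    ‖(1 : ℂ) - Complex.exp (θ * Complex.I)‖ = 2 * |Real.sin (θ / 2)| := by
  have h : (1 : ℂ) - Complex.exp (θ * Complex.I)
      = Complex.ofReal (1 - Real.cos θ) + Complex.ofReal (-Real.sin θ) * Complex.I := by
    rw [Complex.exp_mul_I, ← Complex.ofReal_cos, ← Complex.ofReal_sin]
    push_cast
    ring
  rw [h, Complex.norm_def, Complex.normSq_add_mul_I]
  have h2 : (1 - Real.cos θ) ^ 2 + (-Real.sin θ) ^ 2 = (2 * |Real.sin (θ / 2)|) ^ 2 := by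
    have hs := Real.sin_sq_add_cos_sq θ
    have hc := Real.cos_sq (θ / 2)
    have hs2 : Real.sin (θ / 2) ^ 2 = 1 - Real.cos (θ / 2) ^ 2 := by
      have := Real.sin_sq_add_cos_sq (θ / 2); linarith
    have habs : |Real.sin (θ / 2)| ^ 2 = Real.sin (θ / 2) ^ 2 := sq_abs _
    have h3 : (2 : ℝ) * (θ / 2) = θ := by ring
    rw [h3] at hc
    nlinarith
  rw [h2, Real.sqrt_sq (by positivity)]

lemma norm_one_add_exp (θ : ℝ) :
    ‖(1 : ℂ) + Complex.exp (θ * Complex.I)‖ = 2 * |Real.cos (θ / 2)| := by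
  have h : (1 : ℂ) + Complex.exp (θ * Complex.I)
      = Complex.ofReal (1 + Real.cos θ) + Complex.ofReal (Real.sin θ) * Complex.I := by
    rw [Complex.exp_mul_I, ← Complex.ofReal_cos, ← Complex.ofReal_sin]
    push_cast
    ring
  rw [h, Complex.norm_def, Complex.normSq_add_mul_I]
  have h2 : (1 + Real.cos θ) ^ 2 + (Real.sin θ) ^ 2 = (2 * |Real.cos (θ / 2)|) ^ 2 := by
    have hs := Real.sin_sq_add_cos_sq θ
    have hc := Real.cos_sq (θ / 2)
    have habs : |Real.cos (θ / 2)| ^ 2 = Real.cos (θ / 2) ^ 2 := sq_abs _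
    have h3 : (2 : ℝ) * (θ / 2) = θ := by ring
    rw [h3] at hc
    nlinarith
  rw [h2, Real.sqrt_sq (by positivity)]

lemma trig_bounds (hm : 3 ≤ m) (hodd : Odd m) {a : ℕ} (ha1 : 1 ≤ a) (ha2 : a < m) :
    |Real.sin (Real.pi * a / m)| ≤ Real.cos (Real.pi / (2 * m)) ∧
    |Real.cos (Real.pi * a / m)| ≤ Real.cos (Real.pi / (2 * m)) := by
  have hmR : (0 : ℝ) < m := by exact_mod_cast Nat.pos_of_ne_zero (by omega)
  have hpi := Real.pi_pos
  set u : ℝ := Real.pi / (2 * m) with hu_def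
  have hu : 0 < u := by positivity
  have haR1 : (1 : ℝ) ≤ (a : ℝ) := by exact_mod_cast ha1
  have haR2 : (a : ℝ) ≤ (m : ℝ) - 1 := by
    have : (a : ℝ) + 1 ≤ m := by exact_mod_cast ha2
    linarith
  set t : ℝ := Real.pi * a / m with ht_def
  have ht : t = u * (2 * a) := by
    rw [ht_def, hu_def]; field_simp
  have hum : u * m = Real.pi / 2 := by
    rw [hu_def]; field_simp
  have htlo : u * 2 ≤ t := by
    rw [ht]
    have := mul_le_mul_of_nonneg_left (by linarith : (2:ℝ) ≤ 2 * a) hu.le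
    linarith
  have hthi : t ≤ Real.pi - u * 2 := by
    rw [ht]
    have := mul_le_mul_of_nonneg_left (by linarith : (2:ℝ) * a ≤ 2 * m - 2) hu.le
    have hexp : u * (2 * (m:ℝ) - 2) = 2 * (u * m) - u * 2 := by ring
    rw [hexp, hum] at this
    linarith
  have htpos : 0 < t := by linarith
  have htpi : t ≤ Real.pi := by linarith
  have hu2 : u ≤ Real.pi / 2 := by
    have := mul_le_mul_of_nonneg_left (by linarith : (1:ℝ) ≤ (m:ℝ)) hu.le
    rw [mul_one] at this
    linarith
  constructor
  · -- sin bound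
    have hsnn : 0 ≤ Real.sin t := Real.sin_nonneg_of_nonneg_of_le_pi htpos.le htpi
    rw [_root_.abs_of_nonneg hsnn, ← Real.cos_pi_div_two_sub t, ← Real.cos_abs]
    apply Real.cos_le_cos_of_nonneg_of_le_pi hu.le
    · have : |Real.pi / 2 - t| ≤ Real.pi / 2 := by
        rw [abs_le]; constructor <;> linarith
      linarith
    · have h2a : 2 * a ≠ m := by
        intro h; exact (Nat.not_odd_iff_even.mpr ⟨a, by omega⟩) hodd
      rcases lt_or_gt_of_ne h2a with h | h
      · have h' : (2 * (a : ℝ)) ≤ (m : ℝ) - 1 := by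
          have : ((2 * a + 1 : ℕ) : ℝ) ≤ ((m : ℕ) : ℝ) := by exact_mod_cast (by omega : 2*a+1 ≤ m)
          push_cast at this; linarith
        have hle : t ≤ Real.pi / 2 - u := by
          rw [ht]
          have := mul_le_mul_of_nonneg_left h' hu.le
          have hexp : u * ((m:ℝ) - 1) = u * m - u := by ring
          rw [hexp, hum] at this
          linarith
        rw [_root_.abs_of_nonneg (by linarith)]
        linarith
      · have h' : ((m : ℝ) + 1) ≤ 2 * (a : ℝ) := by
          have : ((m + 1 : ℕ) : ℝ) ≤ ((2 * a : ℕ) : ℝ) := by exact_mod_cast (by omega : m+1 ≤ 2*a)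
          push_cast at this; linarith
        have hge : Real.pi / 2 + u ≤ t := by
          rw [ht]
          have := mul_le_mul_of_nonneg_left h' hu.le
          have hexp : u * ((m:ℝ) + 1) = u * m + u := by ring
          rw [hexp, hum] at this
          linarith
        rw [_root_.abs_of_nonpos (by linarith)]
        linarith
  · -- cos bound
    rcases le_or_gt t (Real.pi / 2) with h | h
    · have hcnn : 0 ≤ Real.cos t := Real.cos_nonneg_of_mem_Icc ⟨by linarith, h⟩
      rw [_root_.abs_of_nonneg hcnn]
      exact Real.cos_le_cos_of_nonneg_of_le_pi hu.le htpi (by linarith)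
    · have hcnp : Real.cos t ≤ 0 :=
        Real.cos_nonpos_of_pi_div_two_le_of_le h.le (by linarith)
      rw [_root_.abs_of_nonpos hcnp, ← Real.cos_pi_sub]
      exact Real.cos_le_cos_of_nonneg_of_le_pi hu.le (by linarith) (by linarith)

lemma cos_u_nonneg (hm : 3 ≤ m) : 0 ≤ Real.cos (Real.pi / (2 * m)) := by
  have hmR : (0 : ℝ) < m := by exact_mod_cast Nat.pos_of_ne_zero (by omega)
  have hpi := Real.pi_pos
  have hmR3 : (3 : ℝ) ≤ m := by exact_mod_cast hm
  apply Real.cos_nonneg_of_mem_Icc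
  constructor
  · have : (0:ℝ) ≤ Real.pi / (2 * m) := by positivity
    linarith
  · rw [div_le_div_iff₀ (by positivity) (by norm_num)]
    nlinarith

lemma zeta_pow (hm0 : m ≠ 0) (a : ℕ) :
    (Complex.exp (2 * Real.pi * Complex.I / m)) ^ a
      = Complex.exp ((2 * Real.pi * a / m : ℝ) * Complex.I) := by
  rw [← Complex.exp_nat_mul]
  congr 1
  push_cast
  ring

lemma term_bound {n : ℕ} (hm : 3 ≤ m) (hodd : Odd m) {a : ℕ} (ha : a < m)
    (S : Finset (Fin n)) (hS : a = 0 → S ≠ ∅) :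
    ‖(1 - (Complex.exp (2 * Real.pi * Complex.I / m)) ^ a) ^ S.card
      * (1 + (Complex.exp (2 * Real.pi * Complex.I / m)) ^ a) ^ (n - S.card)‖
      ≤ 2 ^ n * Real.cos (Real.pi / (2 * m)) ^ n := by
  have hm0 : m ≠ 0 := by omega
  have hc := cos_u_nonneg hm
  rcases Nat.eq_zero_or_pos a with rfl | ha1
  · have hcard : 0 < S.card := Finset.card_pos.2 (Finset.nonempty_iff_ne_empty.2 (hS rfl))
    simp only [pow_zero]
    rw [show (1 : ℂ) - 1 = 0 by ring, zero_pow (by omega), zero_mul, norm_zero]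
    positivity
  · set θ : ℝ := 2 * Real.pi * a / m with hθ_def
    have hz : (Complex.exp (2 * Real.pi * Complex.I / m)) ^ a
        = Complex.exp ((θ : ℝ) * Complex.I) := zeta_pow hm0 a
    have hθ2 : θ / 2 = Real.pi * a / m := by rw [hθ_def]; ring
    have hsin := (trig_bounds hm hodd ha1 ha).1
    have hcos := (trig_bounds hm hodd ha1 ha).2
    rw [hz, norm_mul, norm_pow, norm_pow, norm_one_sub_exp, norm_one_add_exp, hθ2]
    have hcard : S.card ≤ n := by
      simpa using Finset.card_le_card (Finset.subset_univ S)
    calc (2 * |Real.sin (Real.pi * a / m)|) ^ S.card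
          * (2 * |Real.cos (Real.pi * a / m)|) ^ (n - S.card)
        ≤ (2 * Real.cos (Real.pi / (2 * m))) ^ S.card
          * (2 * Real.cos (Real.pi / (2 * m))) ^ (n - S.card) := by
          apply mul_le_mul
          · exact pow_le_pow_left₀ (by positivity) (by linarith) _
          · exact pow_le_pow_left₀ (by positivity) (by linarith) _
          · positivity
          · positivity
      _ = 2 ^ n * Real.cos (Real.pi / (2 * m)) ^ n := by
          rw [← pow_add, Nat.add_sub_cancel' hcard, mul_pow]

lemma master {n : ℕ} (hm0 : m ≠ 0) (A : Finset ℕ) (hA : A ⊆ Finset.range m)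
    (S : Finset (Fin n)) :
    ∑ x : Fin n → Bool, ((MOD n m A x : ℝ) : ℂ) * (chi S x : ℂ)
      = (∑ x : Fin n → Bool, (chi S x : ℂ))
        - (2 / m) * ∑ j ∈ A, ∑ a ∈ Finset.range m,
            (Complex.exp (2 * Real.pi * Complex.I / m)) ^ (a * (m - j))
              * ((1 - (Complex.exp (2 * Real.pi * Complex.I / m)) ^ a) ^ S.card
                 * (1 + (Complex.exp (2 * Real.pi * Complex.I / m)) ^ a) ^ (n - S.card)) := by
  set ζ := Complex.exp (2 * Real.pi * Complex.I / m) with hζdef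
  have h1 : ∀ x : Fin n → Bool, ((MOD n m A x : ℝ) : ℂ) * (chi S x : ℂ)
      = (chi S x : ℂ) - ∑ j ∈ A, ∑ a ∈ Finset.range m,
          (2 / m) * (ζ ^ (a * (m - j)) * ((chi S x : ℂ) * (ζ ^ a) ^ (cnt x))) := by
    intro x
    have hk := key_identity hm0 A hA (cnt x)
    have hMODc : ((MOD n m A x : ℝ) : ℂ) = (if cnt x % m ∈ A then ((-1 : ℝ) : ℂ) else 1) := by
      unfold MOD; split_ifs <;> simp
    rw [hMODc]
    rw [show (if cnt x % m ∈ A then ((-1 : ℝ) : ℂ) else 1)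
        = (1 : ℂ) - (2 / m) * ∑ j ∈ A, ∑ a ∈ Finset.range m,
            (ζ ^ a) ^ (cnt x) * ζ ^ (a * (m - j)) from hk]
    rw [sub_mul, one_mul]
    congr 1
    simp only [Finset.mul_sum, Finset.sum_mul]
    apply Finset.sum_congr rfl; intro j _
    apply Finset.sum_congr rfl; intro a _
    ring
  rw [Finset.sum_congr rfl (fun x _ => h1 x), Finset.sum_sub_distrib]
  congr 1
  rw [Finset.sum_comm, Finset.mul_sum]
  apply Finset.sum_congr rfl; intro j _
  rw [Finset.sum_comm, Finset.mul_sum]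
  apply Finset.sum_congr rfl; intro a _
  rw [← T_eq S (ζ ^ a), Finset.mul_sum, Finset.mul_sum]

lemma zeta_norm_pow (hm0 : m ≠ 0) (k : ℕ) :
    ‖(Complex.exp (2 * Real.pi * Complex.I / m)) ^ k‖ = 1 := by
  rw [norm_pow]
  rw [show (2 * (Real.pi:ℂ) * Complex.I / (m:ℂ)) = ((2 * Real.pi / m : ℝ) : ℂ) * Complex.I by
    push_cast; ring]
  rw [Complex.norm_exp_ofReal_mul_I, one_pow]

lemma part_nonempty {n : ℕ} (hm : 3 ≤ m) (hodd : Odd m)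
    (A : Finset ℕ) (hA : A ⊆ Finset.range m) (S : Finset (Fin n)) (hS : S ≠ ∅) :
    |∑ x : Fin n → Bool, MOD n m A x * chi S x|
      ≤ 2 * m * (2 ^ n * Real.cos (Real.pi / (2 * m)) ^ n) := by
  have hm0 : m ≠ 0 := by omega
  have hmR : (0 : ℝ) < m := by exact_mod_cast Nat.pos_of_ne_zero hm0
  set ζ := Complex.exp (2 * Real.pi * Complex.I / m) with hζdef
  set B : ℝ := 2 ^ n * Real.cos (Real.pi / (2 * m)) ^ n with hB_def
  have hB : 0 ≤ B := by
    have := cos_u_nonneg hm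
    positivity
  -- pass to ℂ
  have hcast : |∑ x : Fin n → Bool, MOD n m A x * chi S x|
      = ‖∑ x : Fin n → Bool, ((MOD n m A x : ℝ) : ℂ) * (chi S x : ℂ)‖ := by
    rw [show (∑ x : Fin n → Bool, ((MOD n m A x : ℝ) : ℂ) * (chi S x : ℂ))
        = ((∑ x : Fin n → Bool, MOD n m A x * chi S x : ℝ) : ℂ) by push_cast; rfl]
    rw [Complex.norm_real, Real.norm_eq_abs]
  rw [hcast, master hm0 A hA S]
  -- chi sum is zero
  have hcard : S.card ≠ 0 := fun h => hS (Finset.card_eq_zero.1 h)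
  have h0 : ∑ x : Fin n → Bool, (chi S x : ℂ) = 0 := by
    have h := T_eq S 1
    rw [show (1 : ℂ) - 1 = 0 by ring, zero_pow hcard, zero_mul] at h
    simpa using h
  rw [h0, zero_sub, norm_neg, norm_mul]
  have hnrm2m : ‖(2 / (m : ℂ))‖ = 2 / (m : ℝ) := by
    rw [norm_div]
    simp
  rw [hnrm2m]
  -- bound the double sum
  have hR : ‖∑ j ∈ A, ∑ a ∈ Finset.range m,
      ζ ^ (a * (m - j)) * ((1 - ζ ^ a) ^ S.card * (1 + ζ ^ a) ^ (n - S.card))‖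
      ≤ (A.card : ℝ) * ((m : ℝ) * B) := by
    calc ‖∑ j ∈ A, ∑ a ∈ Finset.range m,
        ζ ^ (a * (m - j)) * ((1 - ζ ^ a) ^ S.card * (1 + ζ ^ a) ^ (n - S.card))‖
        ≤ ∑ j ∈ A, ‖∑ a ∈ Finset.range m,
            ζ ^ (a * (m - j)) * ((1 - ζ ^ a) ^ S.card * (1 + ζ ^ a) ^ (n - S.card))‖ :=
          norm_sum_le _ _
      _ ≤ ∑ j ∈ A, ((m : ℝ) * B) := by
          apply Finset.sum_le_sum
          intro j _
          calc ‖∑ a ∈ Finset.range m,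
              ζ ^ (a * (m - j)) * ((1 - ζ ^ a) ^ S.card * (1 + ζ ^ a) ^ (n - S.card))‖
              ≤ ∑ a ∈ Finset.range m, ‖ζ ^ (a * (m - j))
                  * ((1 - ζ ^ a) ^ S.card * (1 + ζ ^ a) ^ (n - S.card))‖ := norm_sum_le _ _
            _ ≤ ∑ _a ∈ Finset.range m, B := by
                apply Finset.sum_le_sum
                intro a ha
                rw [norm_mul, zeta_norm_pow hm0, one_mul]
                exact term_bound hm hodd (Finset.mem_range.1 ha) S (fun _ => hS)
            _ = (m : ℝ) * B := by
                rw [Finset.sum_const, Finset.card_range, nsmul_eq_mul]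
      _ = (A.card : ℝ) * ((m : ℝ) * B) := by
          rw [Finset.sum_const, nsmul_eq_mul]
  have hAcard : (A.card : ℝ) ≤ (m : ℝ) := by
    have := Finset.card_le_card hA
    rw [Finset.card_range] at this
    exact_mod_cast this
  have hKb : ‖∑ j ∈ A, ∑ a ∈ Finset.range m,
      ζ ^ (a * (m - j)) * ((1 - ζ ^ a) ^ S.card * (1 + ζ ^ a) ^ (n - S.card))‖
      ≤ (m : ℝ) * ((m : ℝ) * B) := by
    refine le_trans hR ?_
    apply mul_le_mul_of_nonneg_right hAcard (by positivity)
  calc 2 / (m : ℝ) * ‖∑ j ∈ A, ∑ a ∈ Finset.range m,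
      ζ ^ (a * (m - j)) * ((1 - ζ ^ a) ^ S.card * (1 + ζ ^ a) ^ (n - S.card))‖
      ≤ 2 / (m : ℝ) * ((m : ℝ) * ((m : ℝ) * B)) :=
        mul_le_mul_of_nonneg_left hKb (by positivity)
    _ = 2 * (m : ℝ) * B := by field_simp

lemma part_empty {n : ℕ} (hm : 3 ≤ m) (hodd : Odd m)
    (A : Finset ℕ) (hA : A ⊆ Finset.range m) (hne : A ≠ ∅) (hfull : A ≠ Finset.range m) :
    |∑ x : Fin n → Bool, MOD n m A x * chi (∅ : Finset (Fin n)) x|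
      ≤ (1 - 2 / m) * 2 ^ n + 2 * m * (2 ^ n * Real.cos (Real.pi / (2 * m)) ^ n) := by
  have hm0 : m ≠ 0 := by omega
  have hmR : (0 : ℝ) < m := by exact_mod_cast Nat.pos_of_ne_zero hm0
  have hmR3 : (3 : ℝ) ≤ m := by exact_mod_cast hm
  set ζ := Complex.exp (2 * Real.pi * Complex.I / m) with hζdef
  set B : ℝ := 2 ^ n * Real.cos (Real.pi / (2 * m)) ^ n with hB_def
  have hB : 0 ≤ B := by
    have := cos_u_nonneg hm
    positivity
  have hcast : |∑ x : Fin n → Bool, MOD n m A x * chi (∅ : Finset (Fin n)) x|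
      = ‖∑ x : Fin n → Bool, ((MOD n m A x : ℝ) : ℂ) * (chi (∅ : Finset (Fin n)) x : ℂ)‖ := by
    rw [show (∑ x : Fin n → Bool, ((MOD n m A x : ℝ) : ℂ) * (chi (∅ : Finset (Fin n)) x : ℂ))
        = ((∑ x : Fin n → Bool, MOD n m A x * chi (∅ : Finset (Fin n)) x : ℝ) : ℂ) by
          push_cast; rfl]
    rw [Complex.norm_real, Real.norm_eq_abs]
  rw [hcast, master hm0 A hA ∅]
  have hchi : ∑ x : Fin n → Bool, (chi (∅ : Finset (Fin n)) x : ℂ) = (2 : ℂ) ^ n := by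
    simp [chi]
  rw [hchi, Finset.card_empty, Nat.sub_zero]
  -- split off a = 0
  have hsplit : ∀ j : ℕ, ∑ a ∈ Finset.range m,
      ζ ^ (a * (m - j)) * ((1 - ζ ^ a) ^ 0 * (1 + ζ ^ a) ^ n)
      = (2 : ℂ) ^ n + ∑ a ∈ (Finset.range m).erase 0,
          ζ ^ (a * (m - j)) * ((1 - ζ ^ a) ^ 0 * (1 + ζ ^ a) ^ n) := by
    intro j
    rw [← Finset.add_sum_erase _ _ (Finset.mem_range.2 (by omega : 0 < m))]
    norm_num
  rw [Finset.sum_congr rfl (fun j _ => hsplit j), Finset.sum_add_distrib, Finset.sum_const,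
    nsmul_eq_mul, mul_add]
  -- now:  ‖2^n - (2/m * (A.card * 2^n) + 2/m * R')‖
  set R' : ℂ := ∑ j ∈ A, ∑ a ∈ (Finset.range m).erase 0,
      ζ ^ (a * (m - j)) * ((1 - ζ ^ a) ^ 0 * (1 + ζ ^ a) ^ n) with hR'def
  have hA1 : 1 ≤ A.card := Finset.card_pos.2 (Finset.nonempty_iff_ne_empty.2 hne)
  have hA2 : A.card < m := by
    have hss : A ⊂ Finset.range m := lt_of_le_of_ne hA hfull
    have := Finset.card_lt_card hss
    rwa [Finset.card_range] at this
  have hA1R : (1 : ℝ) ≤ (A.card : ℝ) := by exact_mod_cast hA1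
  have hA2R : (A.card : ℝ) ≤ (m : ℝ) - 1 := by
    have : (A.card : ℝ) + 1 ≤ m := by exact_mod_cast hA2
    linarith
  -- principal term
  have hmain : ‖(2 : ℂ) ^ n - 2 / (m : ℂ) * ((A.card : ℂ) * (2 : ℂ) ^ n)‖
      ≤ (1 - 2 / m) * 2 ^ n := by
    rw [show (2 : ℂ) ^ n - 2 / (m : ℂ) * ((A.card : ℂ) * (2 : ℂ) ^ n)
        = (((2 : ℝ) ^ n - 2 / (m : ℝ) * ((A.card : ℝ) * (2 : ℝ) ^ n) : ℝ) : ℂ) by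
          push_cast; ring]
    rw [Complex.norm_real, Real.norm_eq_abs]
    set P : ℝ := (2 : ℝ) ^ n with hP_def
    have hP : (0 : ℝ) < P := by positivity
    have hw : (0 : ℝ) < 2 * P / m := by positivity
    have hexpr : P - 2 / (m : ℝ) * ((A.card : ℝ) * P) = P - (2 * P / m) * (A.card : ℝ) := by
      ring
    have htarget : (1 - 2 / (m : ℝ)) * P = P - (2 * P / m) := by ring
    rw [hexpr, htarget, abs_le]
    constructor
    · have h1 := mul_le_mul_of_nonneg_left hA2R hw.le
      have h2 : (2 * P / (m : ℝ)) * ((m : ℝ) - 1) = 2 * P - 2 * P / m := by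
        field_simp
      rw [h2] at h1
      linarith
    · have h1 := mul_le_mul_of_nonneg_left hA1R hw.le
      rw [mul_one] at h1
      linarith
  -- error term
  have hRb : ‖R'‖ ≤ (m : ℝ) * ((m : ℝ) * B) := by
    have hR : ‖R'‖ ≤ (A.card : ℝ) * ((m : ℝ) * B) := by
      calc ‖R'‖ ≤ ∑ j ∈ A, ‖∑ a ∈ (Finset.range m).erase 0,
            ζ ^ (a * (m - j)) * ((1 - ζ ^ a) ^ 0 * (1 + ζ ^ a) ^ n)‖ := norm_sum_le _ _
        _ ≤ ∑ j ∈ A, ((m : ℝ) * B) := by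
            apply Finset.sum_le_sum
            intro j _
            calc ‖∑ a ∈ (Finset.range m).erase 0,
                ζ ^ (a * (m - j)) * ((1 - ζ ^ a) ^ 0 * (1 + ζ ^ a) ^ n)‖
                ≤ ∑ a ∈ (Finset.range m).erase 0, ‖ζ ^ (a * (m - j))
                    * ((1 - ζ ^ a) ^ 0 * (1 + ζ ^ a) ^ n)‖ := norm_sum_le _ _
              _ ≤ ∑ _a ∈ (Finset.range m).erase 0, B := by
                  apply Finset.sum_le_sum
                  intro a ha
                  rw [norm_mul, zeta_norm_pow hm0, one_mul]
                  have ha' : a < m := Finset.mem_range.1 (Finset.mem_of_mem_erase ha)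
                  have ha0 : a ≠ 0 := Finset.ne_of_mem_erase ha
                  have := term_bound (n := n) hm hodd ha' ∅ (fun h => absurd h ha0)
                  rw [Finset.card_empty, Nat.sub_zero] at this
                  exact this
              _ ≤ (m : ℝ) * B := by
                  rw [Finset.sum_const, nsmul_eq_mul]
                  have hcard : (((Finset.range m).erase 0).card : ℝ) ≤ (m : ℝ) := by
                    have h1 : ((Finset.range m).erase 0).card ≤ m := by
                      calc ((Finset.range m).erase 0).card ≤ (Finset.range m).card :=
                        Finset.card_erase_le
                        _ = m := Finset.card_range m
                    exact_mod_cast h1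
                  exact mul_le_mul_of_nonneg_right hcard hB
        _ = (A.card : ℝ) * ((m : ℝ) * B) := by rw [Finset.sum_const, nsmul_eq_mul]
    refine le_trans hR (mul_le_mul_of_nonneg_right (by linarith) (by positivity))
  -- combine by triangle inequality
  calc ‖(2 : ℂ) ^ n - (2 / (m : ℂ) * ((A.card : ℂ) * (2 : ℂ) ^ n) + 2 / (m : ℂ) * R')‖
      = ‖((2 : ℂ) ^ n - 2 / (m : ℂ) * ((A.card : ℂ) * (2 : ℂ) ^ n)) - 2 / (m : ℂ) * R'‖ := by
        ring_nf
    _ ≤ ‖(2 : ℂ) ^ n - 2 / (m : ℂ) * ((A.card : ℂ) * (2 : ℂ) ^ n)‖ + ‖2 / (m : ℂ) * R'‖ :=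
        norm_sub_le _ _
    _ ≤ (1 - 2 / m) * 2 ^ n + 2 * m * B := by
        apply add_le_add hmain
        rw [norm_mul, show ‖(2 / (m : ℂ))‖ = 2 / (m : ℝ) by rw [norm_div]; simp]
        calc 2 / (m : ℝ) * ‖R'‖ ≤ 2 / (m : ℝ) * ((m : ℝ) * ((m : ℝ) * B)) :=
            mul_le_mul_of_nonneg_left hRb (by positivity)
          _ = 2 * (m : ℝ) * B := by field_simp

end AuxMODFourier

/-- for odd `m ≥ 3` and accepting set `A` neither empty nor all of
`{0,…,m−1}`, all nonprincipal Fourier coefficients of `MOD_m^A` are at most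
`2m·cos(π/2m)^n` in absolute value, and the principal one is at most
`1 − 2/m + 2m·cos(π/2m)^n`. -/
theorem mod_fourier_bounds (n m : ℕ) (hm : 3 ≤ m) (hodd : Odd m)
    (A : Finset ℕ) (hA : A ⊆ Finset.range m) (hne : A ≠ ∅) (hfull : A ≠ Finset.range m) :
    (∀ S : Finset (Fin n), S ≠ ∅ →
      |fhat (MOD n m A) S| ≤ 2 * m * Real.cos (Real.pi / (2 * m)) ^ n) ∧
    |fhat (MOD n m A) ∅| ≤ 1 - 2 / m + 2 * m * Real.cos (Real.pi / (2 * m)) ^ n := by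
  have hfh : ∀ S : Finset (Fin n),
      fhat (MOD n m A) S = (∑ x : Fin n → Bool, MOD n m A x * chi S x) / 2 ^ n := by
    intro S; rw [fhat, Fintype.card_fin]
  have h2n : (0 : ℝ) < 2 ^ n := by positivity
  constructor
  · intro S hS
    rw [hfh S, abs_div, abs_of_pos h2n, div_le_iff₀ h2n]
    calc |∑ x : Fin n → Bool, MOD n m A x * chi S x|
        ≤ 2 * m * (2 ^ n * Real.cos (Real.pi / (2 * m)) ^ n) := part_nonempty hm hodd A hA S hS
      _ = 2 * m * Real.cos (Real.pi / (2 * m)) ^ n * 2 ^ n := by ring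
  · rw [hfh ∅, abs_div, abs_of_pos h2n, div_le_iff₀ h2n]
    calc |∑ x : Fin n → Bool, MOD n m A x * chi (∅ : Finset (Fin n)) x|
        ≤ (1 - 2 / m) * 2 ^ n + 2 * m * (2 ^ n * Real.cos (Real.pi / (2 * m)) ^ n) :=
          part_empty hm hodd A hA hne hfull
      _ = (1 - 2 / m + 2 * m * Real.cos (Real.pi / (2 * m)) ^ n) * 2 ^ n := by ring

end
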